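/- Singular value thresholding solves the nuclear norm proximal problem: for any matrix Y ∈ ℝ^{m×n} and τ > 0, the matrix D_τ(Y) = U·max(S − τI, 0)·Vᵀ (where Y = USVᵀ is an SVD of Y) is the unique minimizer of τ‖M‖₊ + (1/2)‖M − Y‖_F² over M ∈ ℝ^{m×n}. -/

import Mathlib

open Matrix

/-- The nuclear norm of a real matrix: the trace of `√(AᵀA)` (sum of singular values). -/
noncomputable def nuclearNorm {m n : Type*} [Fintype m] [Fintype n] [DecidableEq n]
    (A : Matrix m n ℝ) : ℝ :=
  Matrix.trace
    (((Matrix.posSemidef_conjTranspose_mul_self A).1.eigenvectorUnitary : Matrix n n ℝ) *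
      diagonal (Real.sqrt ∘ (Matrix.posSemidef_conjTranspose_mul_self A).1.eigenvalues) *
      (star (Matrix.posSemidef_conjTranspose_mul_self A).1.eigenvectorUnitary : Matrix n n ℝ))

/-- The squared Frobenius norm of a matrix. -/
def frobSq {m n : Type*} [Fintype m] [Fintype n] (A : Matrix m n ℝ) : ℝ :=
  ∑ i, ∑ j, (A i j) ^ 2

section SVTHelpers

noncomputable def psdSqrt {n : Type*} [Fintype n] [DecidableEq n] (A : Matrix n n ℝ)
    (hA : A.PosSemidef) : Matrix n n ℝ :=
  (hA.1.eigenvectorUnitary : Matrix n n ℝ) * diagonal (Real.sqrt ∘ hA.1.eigenvalues) *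
    (star hA.1.eigenvectorUnitary : Matrix n n ℝ)

section
open scoped MatrixOrder
lemma psdSqrt_eq_cfc {n : Type*} [Fintype n] [DecidableEq n] (A : Matrix n n ℝ)
    (hA : A.PosSemidef) : psdSqrt A hA = CFC.sqrt A := by
  rw [CFC.sqrt_eq_cfc, cfc_nnreal_eq_real _ A hA.nonneg, hA.1.cfc_eq]
  simp only [IsHermitian.cfc, psdSqrt]
  congr 3
  ext i
  simp [Real.coe_toNNReal', max_eq_left (hA.eigenvalues_nonneg i)]
end

lemma psdSqrt_posSemidef {n : Type*} [Fintype n] [DecidableEq n] {A : Matrix n n ℝ}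
    (hA : A.PosSemidef) : (psdSqrt A hA).PosSemidef := by
  open scoped MatrixOrder in
  rw [psdSqrt_eq_cfc]; exact (CFC.sqrt_nonneg A).posSemidef

lemma psdSqrt_mul_self {n : Type*} [Fintype n] [DecidableEq n] {A : Matrix n n ℝ}
    (hA : A.PosSemidef) : psdSqrt A hA * psdSqrt A hA = A := by
  open scoped MatrixOrder in
  rw [psdSqrt_eq_cfc]; exact CFC.sqrt_mul_sqrt_self A hA.nonneg

lemma psdSqrt_eq_of_sq_eq {n : Type*} [Fintype n] [DecidableEq n] {A : Matrix n n ℝ}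
    (hA : A.PosSemidef) (B : Matrix n n ℝ) (hB : B.PosSemidef) (h : B ^ 2 = A) :
    B = psdSqrt A hA := by
  open scoped MatrixOrder in
  rw [psdSqrt_eq_cfc]; exact (CFC.sqrt_unique (by rw [← sq]; exact h) hB.nonneg).symm

lemma nuclearNorm_eq_psdSqrt {m n : Type*} [Fintype m] [Fintype n] [DecidableEq n]
    (A : Matrix m n ℝ) :
    nuclearNorm A = Matrix.trace (psdSqrt _ (Matrix.posSemidef_conjTranspose_mul_self A)) := rfl

lemma ct_eq_t {α β : Type*} (A : Matrix α β ℝ) : Aᴴ = Aᵀ := by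
  ext i j; simp [conjTranspose_apply]

variable {m n : ℕ}


variable {m n : ℕ}


lemma sum_dite_lt_le (g : Fin m → ℝ) (hg : ∀ i, 0 ≤ g i) :
    (∑ j : Fin n, if h : (j : ℕ) < m then g ⟨j, h⟩ else 0) ≤ ∑ i : Fin m, g i := by
  set f : ℕ → ℝ := fun x => if h : x < m then g ⟨x, h⟩ else 0 with hf
  have hf0 : ∀ x, 0 ≤ f x := by
    intro x; simp only [hf]; split
    · exact hg _
    · exact le_rfl
  have h1 : (∑ j : Fin n, if h : (j : ℕ) < m then g ⟨j, h⟩ else 0)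
      = ∑ x ∈ Finset.range n, f x := (Fin.sum_univ_eq_sum_range f n)
  have h2 : (∑ i : Fin m, g i) = ∑ x ∈ Finset.range m, f x := by
    rw [← Fin.sum_univ_eq_sum_range f m]
    refine Finset.sum_congr rfl fun i _ => ?_
    simp [hf, i.2]
  rw [h1, h2]
  rcases le_total n m with h | h
  · exact Finset.sum_le_sum_of_subset_of_nonneg (Finset.range_subset_range.2 h)
      (fun x _ _ => hf0 x)
  · refine le_of_eq (Finset.sum_subset (Finset.range_subset_range.2 h) ?_).symm
    intro x _ hx
    simp only [Finset.mem_range, not_lt] at hx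
    simp [hf, Nat.not_lt.mpr hx]


variable {m n : ℕ}

lemma scalar_prox {τ s x : ℝ} (hτ : 0 < τ) (hs : 0 ≤ s) :
    τ * max (s - τ) 0 + (max (s - τ) 0 - s) ^ 2 / 2 + (x - max (s - τ) 0) ^ 2 / 2
      ≤ τ * |x| + (x - s) ^ 2 / 2 := by
  have h1 := le_abs_self x
  rcases le_total s τ with h | h
  · rw [max_eq_right (by linarith)]
    nlinarith [mul_nonneg hs (sub_nonneg.mpr h1), mul_nonneg (sub_nonneg.mpr h) (abs_nonneg x)]
  · rw [max_eq_left (by linarith)]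
    nlinarith [mul_nonneg hτ.le (sub_nonneg.mpr h1)]

lemma frobSq_nonneg (A : Matrix (Fin m) (Fin n) ℝ) : 0 ≤ frobSq A :=
  Finset.sum_nonneg fun _ _ => Finset.sum_nonneg fun _ _ => sq_nonneg _

lemma frobSq_col (A : Matrix (Fin m) (Fin n) ℝ) : frobSq A = ∑ j, ∑ i, (A i j) ^ 2 :=
  Finset.sum_comm

lemma frobSq_eq_trace (A : Matrix (Fin m) (Fin n) ℝ) : frobSq A = Matrix.trace (Aᵀ * A) := by
  rw [frobSq_col]
  simp [Matrix.trace, Matrix.mul_apply, Matrix.diag, sq]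

lemma frobSq_eq_zero {A : Matrix (Fin m) (Fin n) ℝ} (h : frobSq A = 0) : A = 0 := by
  ext i j
  have h1 : ∀ i ∈ Finset.univ, (0:ℝ) ≤ ∑ j, (A i j) ^ 2 :=
    fun _ _ => Finset.sum_nonneg fun _ _ => sq_nonneg _
  have h2 := (Finset.sum_eq_zero_iff_of_nonneg h1).mp h i (Finset.mem_univ i)
  have h3 := (Finset.sum_eq_zero_iff_of_nonneg (fun _ _ => sq_nonneg _)).mp h2 j (Finset.mem_univ j)
  simpa using pow_eq_zero_iff two_ne_zero |>.mp h3

lemma frobSq_conj (A : Matrix (Fin m) (Fin n) ℝ) (U : Matrix (Fin m) (Fin m) ℝ)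
    (V : Matrix (Fin n) (Fin n) ℝ) (hU : Uᵀ * U = 1) (hV : V * Vᵀ = 1) :
    frobSq (Uᵀ * A * V) = frobSq A := by
  rw [frobSq_eq_trace, frobSq_eq_trace]
  have : (Uᵀ * A * V)ᵀ * (Uᵀ * A * V) = Vᵀ * (Aᵀ * A) * V := by
    simp only [Matrix.transpose_mul, Matrix.transpose_transpose, Matrix.mul_assoc]
    rw [← Matrix.mul_assoc U Uᵀ, mul_eq_one_comm.mp hU, Matrix.one_mul]
  rw [this, Matrix.trace_mul_cycle, ← Matrix.mul_assoc, hV, Matrix.one_mul]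


variable {m n : ℕ}

lemma nuclearNorm_conj (A : Matrix (Fin m) (Fin n) ℝ) (U : Matrix (Fin m) (Fin m) ℝ)
    (V : Matrix (Fin n) (Fin n) ℝ) (hU : Uᵀ * U = 1) (hV : Vᵀ * V = 1) :
    nuclearNorm (Uᵀ * A * V) = nuclearNorm A := by
  have hVV : V * Vᵀ = 1 := mul_eq_one_comm.mp hV
  have hUU : U * Uᵀ = 1 := mul_eq_one_comm.mp hU
  rw [nuclearNorm_eq_psdSqrt, nuclearNorm_eq_psdSqrt]
  set hP := Matrix.posSemidef_conjTranspose_mul_self A with hPd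
  set hPc := Matrix.posSemidef_conjTranspose_mul_self (Uᵀ * A * V) with hPcd
  have h2 : (Uᵀ * A * V)ᴴ * (Uᵀ * A * V) = Vᵀ * (Aᴴ * A) * V := by
    rw [ct_eq_t, ct_eq_t]
    simp only [Matrix.transpose_mul, Matrix.transpose_transpose, Matrix.mul_assoc]
    rw [← Matrix.mul_assoc U Uᵀ, hUU, Matrix.one_mul]
  have hB : Vᵀ * psdSqrt _ hP * V = psdSqrt _ hPc := by
    apply psdSqrt_eq_of_sq_eq
    · have := (psdSqrt_posSemidef hP).conjTranspose_mul_mul_same V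
      simpa [ct_eq_t] using this
    · rw [pow_two]
      calc (Vᵀ * psdSqrt _ hP * V) * (Vᵀ * psdSqrt _ hP * V)
          = Vᵀ * psdSqrt _ hP * (V * Vᵀ) * psdSqrt _ hP * V := by simp only [Matrix.mul_assoc]
        _ = Vᵀ * (Aᴴ * A) * V := by
            rw [hVV, Matrix.mul_one, Matrix.mul_assoc Vᵀ (psdSqrt _ hP) (psdSqrt _ hP), psdSqrt_mul_self hP]
        _ = (Uᵀ * A * V)ᴴ * (Uᵀ * A * V) := h2.symm
  rw [← hB, Matrix.trace_mul_cycle, hVV, Matrix.one_mul]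

lemma nuclearNorm_diagonalish (t : Fin n → ℝ) (ht : ∀ j, 0 ≤ t j)
    (T : Matrix (Fin m) (Fin n) ℝ)
    (hT : Tᴴ * T = Matrix.diagonal (fun j => t j ^ 2)) :
    nuclearNorm T = ∑ j, t j := by
  rw [nuclearNorm_eq_psdSqrt]
  have h1 : Matrix.diagonal t = psdSqrt _ (Matrix.posSemidef_conjTranspose_mul_self T) := by
    apply psdSqrt_eq_of_sq_eq
    · exact Matrix.posSemidef_diagonal_iff.mpr ht
    · rw [pow_two, Matrix.diagonal_mul_diagonal, hT]
      congr 1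
      funext j
      ring_nf
  rw [← h1, Matrix.trace_diagonal]


variable {m n : ℕ}

lemma sum_abs_diag_le_nuclearNorm (N : Matrix (Fin m) (Fin n) ℝ) :
    (∑ j : Fin n, if h : (j : ℕ) < m then |N ⟨j, h⟩ j| else 0) ≤ nuclearNorm N := by
  set hP := Matrix.posSemidef_conjTranspose_mul_self N with hPd
  set Q : Matrix (Fin n) (Fin n) ℝ := (hP.1.eigenvectorUnitary : Matrix (Fin n) (Fin n) ℝ) with hQd
  set d : Fin n → ℝ := hP.1.eigenvalues with hdd
  have hd0 : ∀ k, 0 ≤ d k := fun k => hP.eigenvalues_nonneg k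
  have hQ1 : star Q * Q = 1 := by
    have := Unitary.coe_star_mul_self hP.1.eigenvectorUnitary
    simpa [hQd] using this
  have hQ2 : Q * star Q = 1 := mul_eq_one_comm.mp hQ1
  have hspec : Nᴴ * N = Q * Matrix.diagonal d * star Q := by
    have h := hP.1.spectral_theorem
    rw [RCLike.ofReal_real_eq_id, Function.id_comp] at h
    exact h
  have htr : nuclearNorm N = ∑ k, Real.sqrt (d k) := by
    show Matrix.trace (psdSqrt _ hP) = _
    have hsq : psdSqrt _ hP = Q * Matrix.diagonal (Real.sqrt ∘ d) * star Q := by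
      rfl
    rw [hsq, Matrix.trace_mul_cycle, hQ1, Matrix.one_mul, Matrix.trace_diagonal]
    rfl
  have hcol : ∀ k, (∑ i, ((N * Q) i k) ^ 2) = d k := by
    intro k
    have h1 : star Q * (Nᴴ * N) * Q = Matrix.diagonal d := by
      rw [hspec]
      calc star Q * (Q * Matrix.diagonal d * star Q) * Q
          = (star Q * Q) * Matrix.diagonal d * (star Q * Q) := by simp only [Matrix.mul_assoc]
        _ = Matrix.diagonal d := by rw [hQ1, Matrix.one_mul, Matrix.mul_one]
    have h2 : star Q * (Nᴴ * N) * Q = (N * Q)ᴴ * (N * Q) := by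
      rw [Matrix.conjTranspose_mul, ← Matrix.star_eq_conjTranspose]
      simp only [Matrix.mul_assoc]
    have h4 : ((N * Q)ᴴ * (N * Q)) k k = d k := by
      rw [← h2, h1, Matrix.diagonal_apply_eq]
    rw [← h4]
    simp [Matrix.mul_apply, Matrix.conjTranspose_apply, sq, mul_comm]
  have hQcol : ∀ k, (∑ j, (Q j k) ^ 2) = 1 := by
    intro k
    have h4 := congrFun (congrFun hQ1 k) k
    simpa [Matrix.mul_apply, Matrix.star_apply, Matrix.one_apply, sq] using h4
  have hexp : ∀ (i : Fin m) (j : Fin n), N i j = ∑ k, (N * Q) i k * Q j k := by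
    intro i j
    calc N i j = (N * (Q * star Q)) i j := by rw [hQ2, Matrix.mul_one]
      _ = ((N * Q) * star Q) i j := by rw [Matrix.mul_assoc]
      _ = ∑ k, (N * Q) i k * Q j k := by simp [Matrix.mul_apply, Matrix.star_apply]
  set c : Fin n → ℝ := fun j =>
    if h : (j:ℕ) < m then (if N ⟨j,h⟩ j < 0 then (-1:ℝ) else 1) else 0 with hcd
  set v : Fin n → Fin n → ℝ := fun k j =>
    if h : (j:ℕ) < m then (N * Q) ⟨j,h⟩ k else 0 with hvd
  have step1 : (∑ j : Fin n, if h : (j : ℕ) < m then |N ⟨j, h⟩ j| else 0)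
      = ∑ j, ∑ k, (c j * Q j k) * v k j := by
    refine Finset.sum_congr rfl fun j _ => ?_
    by_cases h : (j:ℕ) < m
    · rw [dif_pos h]
      have habs : |N ⟨j,h⟩ j| = c j * N ⟨j,h⟩ j := by
        rw [hcd]; simp only [dif_pos h]
        rcases lt_or_ge (N ⟨j,h⟩ j) 0 with hx | hx
        · rw [if_pos hx, abs_of_neg hx]; ring
        · rw [if_neg (not_lt.mpr hx), abs_of_nonneg hx]; ring
      rw [habs, hexp ⟨j,h⟩ j, Finset.mul_sum]
      refine Finset.sum_congr rfl fun k _ => ?_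
      rw [hvd]; simp only [dif_pos h]; ring
    · rw [dif_neg h]
      symm; apply Finset.sum_eq_zero; intro k _
      rw [hvd]; simp only [dif_neg h, mul_zero]
  have step2 : ∀ k, (∑ j, (c j * Q j k) * v k j) ≤ Real.sqrt (d k) := by
    intro k
    have cs := Real.sum_mul_le_sqrt_mul_sqrt Finset.univ
      (fun j => c j * Q j k) (fun j => v k j)
    have hu : (∑ j, (c j * Q j k) ^ 2) ≤ 1 := by
      refine le_trans (Finset.sum_le_sum fun j _ => ?_) (le_of_eq (hQcol k))
      have hc1 : (c j) ^ 2 ≤ 1 := by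
        rw [hcd]; dsimp only; split_ifs <;> norm_num
      calc (c j * Q j k) ^ 2 = (c j) ^ 2 * (Q j k) ^ 2 := by ring
        _ ≤ 1 * (Q j k) ^ 2 := mul_le_mul_of_nonneg_right hc1 (sq_nonneg _)
        _ = (Q j k) ^ 2 := one_mul _
    have hv : (∑ j, (v k j) ^ 2) ≤ d k := by
      rw [← hcol k]
      refine le_trans (le_of_eq ?_)
        (sum_dite_lt_le (n := n) (fun i => ((N * Q) i k) ^ 2) (fun i => sq_nonneg _))
      refine Finset.sum_congr rfl fun j _ => ?_
      rw [hvd]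
      by_cases h : (j:ℕ) < m
      · simp only [dif_pos h]
      · simp only [dif_neg h]; norm_num
    calc (∑ j, (c j * Q j k) * v k j)
        ≤ Real.sqrt (∑ j, (c j * Q j k) ^ 2) * Real.sqrt (∑ j, (v k j) ^ 2) := cs
      _ ≤ 1 * Real.sqrt (d k) := by
          apply mul_le_mul (Real.sqrt_le_one.mpr hu) (Real.sqrt_le_sqrt hv)
            (Real.sqrt_nonneg _) zero_le_one
      _ = Real.sqrt (d k) := one_mul _
  calc (∑ j : Fin n, if h : (j : ℕ) < m then |N ⟨j, h⟩ j| else 0)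
      = ∑ k, ∑ j, (c j * Q j k) * v k j := step1.trans Finset.sum_comm
    _ ≤ ∑ k, Real.sqrt (d k) := Finset.sum_le_sum fun k _ => step2 k
    _ = nuclearNorm N := htr.symm


end SVTHelpers

/-- **Singular value thresholding solves the nuclear norm proximal problem.**
Let `Y = U·S·Vᵀ` be an SVD of `Y` (`U`, `V` orthogonal, `S` nonnegative and
diagonal), and for `τ > 0` let `D_τ(Y) = U·max(S − τI, 0)·Vᵀ`.  Then `D_τ(Y)`
is the unique minimizer of `τ‖M‖₊ + (1/2)‖M − Y‖_F²` over all `M`. -/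
theorem svt_solves_nuclear_prox (m n : ℕ) (Y : Matrix (Fin m) (Fin n) ℝ)
    (τ : ℝ) (hτ : 0 < τ)
    (U : Matrix (Fin m) (Fin m) ℝ) (S : Matrix (Fin m) (Fin n) ℝ)
    (V : Matrix (Fin n) (Fin n) ℝ)
    (hU : Uᵀ * U = 1) (hV : Vᵀ * V = 1)
    (hSdiag : ∀ (i : Fin m) (j : Fin n), (i : ℕ) ≠ (j : ℕ) → S i j = 0)
    (hSnonneg : ∀ (i : Fin m) (j : Fin n), 0 ≤ S i j)
    (hY : Y = U * S * Vᵀ)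
    (D : Matrix (Fin m) (Fin n) ℝ)
    (hD : D = U * (Matrix.of fun (i : Fin m) (j : Fin n) =>
      if (i : ℕ) = (j : ℕ) then max (S i j - τ) 0 else 0) * Vᵀ) :
    (∀ M : Matrix (Fin m) (Fin n) ℝ,
        τ * nuclearNorm D + (1 / 2) * frobSq (D - Y) ≤
        τ * nuclearNorm M + (1 / 2) * frobSq (M - Y)) ∧
    (∀ M : Matrix (Fin m) (Fin n) ℝ,
        τ * nuclearNorm M + (1 / 2) * frobSq (M - Y) =
        τ * nuclearNorm D + (1 / 2) * frobSq (D - Y) → M = D) := by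
  classical
  set T : Matrix (Fin m) (Fin n) ℝ := Matrix.of fun (i : Fin m) (j : Fin n) =>
      if (i : ℕ) = (j : ℕ) then max (S i j - τ) 0 else 0 with hTd
  set t : Fin n → ℝ := fun j => if h : (j : ℕ) < m then max (S ⟨j, h⟩ j - τ) 0 else 0 with htd
  have hUU : U * Uᵀ = 1 := mul_eq_one_comm.mp hU
  have hVV : V * Vᵀ = 1 := mul_eq_one_comm.mp hV
  have ht0 : ∀ j, 0 ≤ t j := by
    intro j; rw [htd]; dsimp only; split
    · exact le_max_right _ _
    · exact le_rfl
  have hTapp : ∀ i j, T i j = if (i : ℕ) = (j : ℕ) then max (S i j - τ) 0 else 0 :=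
    fun i j => rfl
  have hT0 : ∀ (i : Fin m) (j : Fin n), (i : ℕ) ≠ (j : ℕ) → T i j = 0 := by
    intro i j h; rw [hTapp, if_neg h]
  -- TᵀT is diagonal
  have hTT : Tᴴ * T = Matrix.diagonal (fun j => t j ^ 2) := by
    rw [ct_eq_t]
    ext j k
    rw [Matrix.mul_apply]
    by_cases hjk : j = k
    · subst hjk
      rw [Matrix.diagonal_apply_eq]
      by_cases h : (j : ℕ) < m
      · have htj : t j = max (S ⟨(j:ℕ), h⟩ j - τ) 0 := dif_pos h
        rw [Finset.sum_eq_single (⟨(j:ℕ), h⟩ : Fin m)]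
        · rw [Matrix.transpose_apply, hTapp, if_pos rfl, htj]; ring
        · intro i _ hi
          have : (i : ℕ) ≠ (j : ℕ) := fun hc => hi (Fin.val_injective hc)
          rw [Matrix.transpose_apply, hT0 i j this, mul_zero]
        · intro hmem; exact absurd (Finset.mem_univ _) hmem
      · have htj : t j = 0 := dif_neg h
        rw [htj]
        have : ∀ i : Fin m, T i j = 0 := fun i =>
          hT0 i j (fun hc => h (hc ▸ i.2))
        rw [Finset.sum_eq_zero fun i _ => by rw [this i, mul_zero]]
        norm_num
    · have hjk' : (j : ℕ) ≠ (k : ℕ) := fun hc => hjk (Fin.val_injective hc)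
      rw [Matrix.diagonal_apply_ne _ hjk]
      refine Finset.sum_eq_zero fun i _ => ?_
      rw [Matrix.transpose_apply]
      by_cases hij : (i : ℕ) = (j : ℕ)
      · rw [hT0 i k (fun hc => hjk' (hij ▸ hc)), mul_zero]
      · rw [hT0 i j hij, zero_mul]
  have hUDV : Uᵀ * D * V = T := by
    rw [hD]
    calc Uᵀ * (U * T * Vᵀ) * V = (Uᵀ * U) * T * (Vᵀ * V) := by simp only [Matrix.mul_assoc]
      _ = T := by rw [hU, hV, Matrix.one_mul, Matrix.mul_one]
  have hUYV : Uᵀ * Y * V = S := by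
    rw [hY]
    calc Uᵀ * (U * S * Vᵀ) * V = (Uᵀ * U) * S * (Vᵀ * V) := by simp only [Matrix.mul_assoc]
      _ = S := by rw [hU, hV, Matrix.one_mul, Matrix.mul_one]
  -- the master inequality
  have key : ∀ M : Matrix (Fin m) (Fin n) ℝ,
      τ * nuclearNorm D + 1 / 2 * frobSq (D - Y) + 1 / 2 * frobSq (Uᵀ * M * V - T)
        ≤ τ * nuclearNorm M + 1 / 2 * frobSq (M - Y) := by
    intro M
    set N : Matrix (Fin m) (Fin n) ℝ := Uᵀ * M * V with hNd
    have e1 : nuclearNorm M = nuclearNorm N := (nuclearNorm_conj M U V hU hV).symm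
    have hMYc : Uᵀ * (M - Y) * V = N - S := by
      rw [Matrix.mul_sub, Matrix.sub_mul, hUYV]
    have e2 : frobSq (M - Y) = frobSq (N - S) := by
      rw [← frobSq_conj (M - Y) U V hU hVV, hMYc]
    have hDYc : Uᵀ * (D - Y) * V = T - S := by
      rw [Matrix.mul_sub, Matrix.sub_mul, hUYV, hUDV]
    have e3 : nuclearNorm D = nuclearNorm T := by
      rw [← nuclearNorm_conj D U V hU hV, hUDV]
    have e4 : frobSq (D - Y) = frobSq (T - S) := by
      rw [← frobSq_conj (D - Y) U V hU hVV, hDYc]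
    have e5 : nuclearNorm T = ∑ j, t j := nuclearNorm_diagonalish t ht0 T hTT
    have e6 := sum_abs_diag_le_nuclearNorm N
    rw [e1, e2, e3, e4, e5]
    have colsum : ∀ j : Fin n,
        τ * t j + 1 / 2 * ∑ i, ((T - S) i j) ^ 2 + 1 / 2 * ∑ i, ((N - T) i j) ^ 2
          ≤ τ * (if h : (j : ℕ) < m then |N ⟨j, h⟩ j| else 0)
            + 1 / 2 * ∑ i, ((N - S) i j) ^ 2 := by
      intro j
      by_cases h : (j : ℕ) < m
      · set i0 : Fin m := ⟨(j : ℕ), h⟩ with hi0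
        have htj : t j = max (S i0 j - τ) 0 := dif_pos h
        have hTi0 : T i0 j = max (S i0 j - τ) 0 := by rw [hTapp, if_pos rfl]
        have hS0 : ∀ i : Fin m, i ≠ i0 → S i j = 0 := fun i hi =>
          hSdiag i j (fun hc => hi (Fin.val_injective hc))
        have hT0' : ∀ i : Fin m, i ≠ i0 → T i j = 0 := fun i hi =>
          hT0 i j (fun hc => hi (Fin.val_injective hc))
        rw [dif_pos h]
        have hsplit : ∀ B : Matrix (Fin m) (Fin n) ℝ,
            (∑ i, (B i j) ^ 2) = (B i0 j) ^ 2 + ∑ i ∈ Finset.univ.erase i0, (B i j) ^ 2 :=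
          fun B => (Finset.add_sum_erase _ _ (Finset.mem_univ i0)).symm
        rw [hsplit (T - S), hsplit (N - T), hsplit (N - S)]
        have hoff1 : (∑ i ∈ Finset.univ.erase i0, ((T - S) i j) ^ 2) = 0 :=
          Finset.sum_eq_zero fun i hi => by
            rw [Matrix.sub_apply, hT0' i (Finset.ne_of_mem_erase hi),
              hS0 i (Finset.ne_of_mem_erase hi), sub_zero]
            norm_num
        have hoff2 : (∑ i ∈ Finset.univ.erase i0, ((N - T) i j) ^ 2)
            = ∑ i ∈ Finset.univ.erase i0, ((N - S) i j) ^ 2 :=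
          Finset.sum_congr rfl fun i hi => by
            rw [Matrix.sub_apply, Matrix.sub_apply, hT0' i (Finset.ne_of_mem_erase hi),
              hS0 i (Finset.ne_of_mem_erase hi)]
        have hsc := scalar_prox (τ := τ) (s := S i0 j) (x := N i0 j) hτ (hSnonneg i0 j)
        rw [hoff1, hoff2, Matrix.sub_apply, Matrix.sub_apply, Matrix.sub_apply, hTi0, htj]
        set R := ∑ i ∈ Finset.univ.erase i0, ((N - S) i j) ^ 2
        nlinarith [hsc]
      · rw [dif_neg h]
        have htj : t j = 0 := dif_neg h
        have hS0 : ∀ i : Fin m, S i j = 0 := fun i =>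
          hSdiag i j (fun hc => h (hc ▸ i.2))
        have hT0' : ∀ i : Fin m, T i j = 0 := fun i =>
          hT0 i j (fun hc => h (hc ▸ i.2))
        have heq1 : (∑ i, ((T - S) i j) ^ 2) = 0 :=
          Finset.sum_eq_zero fun i _ => by
            rw [Matrix.sub_apply, hT0' i, hS0 i, sub_zero]; norm_num
        have heq2 : (∑ i, ((N - T) i j) ^ 2) = ∑ i, ((N - S) i j) ^ 2 :=
          Finset.sum_congr rfl fun i _ => by
            rw [Matrix.sub_apply, Matrix.sub_apply, hT0' i, hS0 i]
        rw [htj, heq1, heq2]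
        simp
    calc τ * ∑ j, t j + 1 / 2 * frobSq (T - S) + 1 / 2 * frobSq (N - T)
        = ∑ j, (τ * t j + 1 / 2 * ∑ i, ((T - S) i j) ^ 2
            + 1 / 2 * ∑ i, ((N - T) i j) ^ 2) := by
          rw [frobSq_col, frobSq_col, Finset.mul_sum, Finset.mul_sum, Finset.mul_sum,
            ← Finset.sum_add_distrib, ← Finset.sum_add_distrib]
      _ ≤ ∑ j : Fin n, (τ * (if h : (j : ℕ) < m then |N ⟨j, h⟩ j| else 0)
            + 1 / 2 * ∑ i, ((N - S) i j) ^ 2) := Finset.sum_le_sum fun j _ => colsum j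
      _ = τ * (∑ j : Fin n, if h : (j : ℕ) < m then |N ⟨j, h⟩ j| else 0)
            + 1 / 2 * frobSq (N - S) := by
          rw [frobSq_col, Finset.mul_sum, Finset.mul_sum, ← Finset.sum_add_distrib]
      _ ≤ τ * nuclearNorm N + 1 / 2 * frobSq (N - S) := by
          have := mul_le_mul_of_nonneg_left e6 hτ.le
          linarith
  have hMrec : ∀ M : Matrix (Fin m) (Fin n) ℝ, U * (Uᵀ * M * V) * Vᵀ = M := by
    intro M
    calc U * (Uᵀ * M * V) * Vᵀ = (U * Uᵀ) * M * (V * Vᵀ) := by simp only [Matrix.mul_assoc]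
      _ = M := by rw [hUU, hVV, Matrix.one_mul, Matrix.mul_one]
  constructor
  · intro M
    have h1 := key M
    have h2 := frobSq_nonneg (Uᵀ * M * V - T)
    linarith
  · intro M hEq
    have h1 := key M
    have h2 := frobSq_nonneg (Uᵀ * M * V - T)
    have h3 : frobSq (Uᵀ * M * V - T) = 0 := by linarith
    have h4 : Uᵀ * M * V = T := sub_eq_zero.mp (frobSq_eq_zero h3)
    calc M = U * (Uᵀ * M * V) * Vᵀ := (hMrec M).symm
      _ = U * T * Vᵀ := by rw [h4]
      _ = D := hD.symm
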